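/- Let n ≥ 3, p ∈ [0,1]^n with p̄ = (1/n)Σ_i p_i > 0. Then ∫_0^1 Π_{i=3}^n (1 - p_i t) dt ≤ (n/(n-2))^{n-2} · (n/(n-1)) · 1/(n·p̄), and in particular this integral is strictly less than e^2/(n·p̄). -/

import Mathlib

open Finset

private lemma amgm_pow {ι : Type*} (s : Finset ι) (z : ι → ℝ) (hz : ∀ i ∈ s, 0 ≤ z i)
    (hc : 0 < s.card) :
    ∏ i ∈ s, z i ≤ ((∑ i ∈ s, z i) / s.card) ^ s.card := by
  have hcR : (0:ℝ) < s.card := by exact_mod_cast hc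
  have h := Real.geom_mean_le_arith_mean_weighted s (fun _ => (s.card : ℝ)⁻¹) z
    (fun i _ => by positivity)
    (by simp [Finset.sum_const, nsmul_eq_mul]; field_simp)
    hz
  have hL : ∏ i ∈ s, z i ^ ((s.card : ℝ)⁻¹) = (∏ i ∈ s, z i) ^ ((s.card : ℝ)⁻¹) :=
    Real.finset_prod_rpow s z hz _
  have hR : ∑ i ∈ s, (s.card : ℝ)⁻¹ * z i = (∑ i ∈ s, z i) / s.card := by
    rw [← Finset.mul_sum]; ring
  rw [hL, hR] at h
  have hprod : 0 ≤ ∏ i ∈ s, z i := Finset.prod_nonneg hz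
  have := pow_le_pow_left₀ (Real.rpow_nonneg hprod _) h s.card
  rwa [← Real.rpow_natCast ((∏ i ∈ s, z i) ^ ((s.card:ℝ)⁻¹)) s.card,
    ← Real.rpow_mul hprod, inv_mul_cancel₀ (ne_of_gt hcR), Real.rpow_one] at this

private lemma K_lt_exp_two (N : ℕ) (hN : 1 ≤ N) :
    (((N:ℝ) + 2) / N) ^ N * (((N:ℝ) + 2) / ((N:ℝ) + 1)) < Real.exp 2 := by
  set m : ℝ := (N : ℝ) with hm
  have hm1 : (1:ℝ) ≤ m := by rw [hm]; exact_mod_cast hN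
  have hm0 : (0:ℝ) < m := by linarith
  have hm1' : (0:ℝ) < m + 1 := by linarith
  set y : ℝ := 2 / m - 1 / (m * (m + 1)) with hy
  have hy0 : 0 ≤ y := by
    rw [hy]
    have : 1 / (m * (m+1)) ≤ 2 / m := by
      rw [div_le_div_iff₀ (by positivity) hm0]; nlinarith
    linarith
  have hq : 1 + y + y ^ 2 / 2 ≤ Real.exp y := Real.quadratic_le_exp_of_nonneg hy0
  have hbase : (m + 2) / m ≤ Real.exp y := by
    have h1 : (m + 2) / m = 1 + 2 / m := by field_simp
    have h2 : 1 + 2 / m ≤ 1 + y + y ^ 2 / 2 := by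
      have hyval : y = (2 * m + 1) / (m * (m + 1)) := by rw [hy]; field_simp; ring
      have : 1 / (m * (m+1)) ≤ y ^ 2 / 2 := by
        rw [hyval, div_pow, div_div, div_le_div_iff₀ (by positivity) (by positivity)]
        have h4 : (0:ℝ) < m * (m+1) := by positivity
        nlinarith [sq_nonneg (m*(m+1)), mul_pos hm0 hm1']
      have h3 : 2 / m = y + 1 / (m * (m+1)) := by rw [hy]; ring
      linarith
    linarith [h1, h2, hq]
  have hpow : ((m + 2) / m) ^ N ≤ Real.exp (2 - 1 / (m + 1)) := by
    calc ((m + 2) / m) ^ N ≤ (Real.exp y) ^ N :=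
          pow_le_pow_left₀ (by positivity) hbase N
      _ = Real.exp (m * y) := by rw [← Real.exp_nat_mul, hm]
      _ = Real.exp (2 - 1 / (m + 1)) := by
          congr 1; rw [hy]; field_simp
  have hfac : (m + 2) / (m + 1) < Real.exp (1 / (m + 1)) := by
    have h1 : (m + 2) / (m + 1) = 1 / (m+1) + 1 := by field_simp; ring
    rw [h1]
    exact Real.add_one_lt_exp (by positivity)
  calc ((m + 2) / m) ^ N * ((m + 2) / (m + 1))
      < Real.exp (2 - 1 / (m + 1)) * Real.exp (1 / (m + 1)) := by
        apply mul_lt_mul' hpow hfac (by positivity) (Real.exp_pos _)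
    _ = Real.exp 2 := by rw [← Real.exp_add]; ring_nf

/-- For n ≥ 3 and p ∈ [0,1]^n with positive mean p̄,
∫_0^1 ∏_{i=3}^n (1-pᵢt) dt ≤ (n/(n-2))^{n-2}·(n/(n-1))·(1/(n·p̄)),
and in particular the integral is strictly less than e²/(n·p̄). -/
theorem integral_pair_excluded_bound (n : ℕ) (hn : 3 ≤ n) (p : Fin n → ℝ)
    (hp : ∀ i, p i ∈ Set.Icc (0:ℝ) 1)
    (pbar : ℝ) (hmean : pbar = (1 / (n:ℝ)) * ∑ i, p i) (hpos : 0 < pbar) :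
    (∫ t in (0:ℝ)..1, ∏ i ∈ Finset.univ.filter (fun i : Fin n => 2 ≤ i.val), (1 - p i * t))
      ≤ ((n:ℝ) / ((n:ℝ) - 2)) ^ (n - 2) * ((n:ℝ) / ((n:ℝ) - 1)) * (1 / ((n:ℝ) * pbar))
    ∧ (∫ t in (0:ℝ)..1, ∏ i ∈ Finset.univ.filter (fun i : Fin n => 2 ≤ i.val), (1 - p i * t))
      < Real.exp 2 / ((n:ℝ) * pbar) := by
  have hn3 : (3:ℝ) ≤ (n:ℝ) := by exact_mod_cast hn
  set N : ℕ := n - 2 with hNdef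
  have hN1 : 1 ≤ N := by omega
  have hNcast : (N:ℝ) = (n:ℝ) - 2 := by
    rw [hNdef]; push_cast [Nat.cast_sub (by omega : 2 ≤ n)]; ring
  have hN1cast : ((N:ℝ) + 1) = (n:ℝ) - 1 := by rw [hNcast]; ring
  set S := Finset.univ.filter (fun i : Fin n => 2 ≤ i.val) with hS
  -- cardinality of S
  have hcard : S.card = N := by
    have hSeq : S = (Finset.univ : Finset (Fin n)) \
        {(⟨0, by omega⟩ : Fin n), (⟨1, by omega⟩ : Fin n)} := by
      ext i
      simp only [hS, Finset.mem_filter, Finset.mem_univ, true_and, Finset.mem_sdiff,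
        Finset.mem_insert, Finset.mem_singleton, Fin.ext_iff]
      omega
    rw [hSeq, Finset.card_sdiff_of_subset (by simp)]
    have h2 : ({(⟨0, by omega⟩ : Fin n), (⟨1, by omega⟩ : Fin n)} : Finset (Fin n)).card = 2 := by
      rw [Finset.card_pair (by simp [Fin.ext_iff])]
    rw [h2, Finset.card_univ, Fintype.card_fin]
  -- sum of p
  have hnpos : (0:ℝ) < n := by linarith
  have hsum : ∑ i, p i = (n:ℝ) * pbar := by
    rw [hmean]; field_simp
  have hpbar1 : pbar ≤ 1 := by
    have hle : ∑ i, p i ≤ (n:ℝ) := by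
      calc ∑ i, p i ≤ ∑ _i : Fin n, (1:ℝ) := Finset.sum_le_sum (fun i _ => (hp i).2)
        _ = (n:ℝ) := by simp
    rw [hmean]
    rw [div_mul_eq_mul_div, one_mul, div_le_one hnpos]
    exact hle
  set c : ℝ := (n:ℝ) / ((n:ℝ) - 2) with hc
  have hcpos : 0 < c := by rw [hc]; apply div_pos hnpos; linarith
  have hc' : c = ((N:ℝ) + 2) / N := by rw [hc, hNcast]; ring_nf
  -- pointwise bound on [0,1]
  have hpt : ∀ t ∈ Set.Icc (0:ℝ) 1,
      (∏ i ∈ S, (1 - p i * t)) ≤ c ^ N * (1 - pbar * t) ^ N := by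
    intro t ht
    obtain ⟨ht0, ht1⟩ := ht
    have hterm : ∀ i : Fin n, 0 ≤ 1 - p i * t := by
      intro i
      have := mul_le_one₀ (hp i).2 ht0 ht1
      linarith
    have hbar : 0 ≤ 1 - pbar * t := by
      have := mul_le_one₀ hpbar1 ht0 ht1
      linarith
    have h1 := amgm_pow S (fun i => 1 - p i * t) (fun i _ => hterm i) (by omega)
    have h2 : ∑ i ∈ S, (1 - p i * t) ≤ ∑ i : Fin n, (1 - p i * t) :=
      Finset.sum_le_sum_of_subset_of_nonneg (Finset.filter_subset _ _)
        (fun i _ _ => hterm i)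
    have h3 : ∑ i : Fin n, (1 - p i * t) = (n:ℝ) * (1 - pbar * t) := by
      rw [Finset.sum_sub_distrib, ← Finset.sum_mul, hsum]
      simp [mul_comm]
      ring
    have hNpos : (0:ℝ) < (N:ℝ) := by
      have : 0 < N := by omega
      exact_mod_cast this
    have h4 : ((∑ i ∈ S, (1 - p i * t)) / S.card) ^ S.card
        ≤ (((n:ℝ) * (1 - pbar * t)) / ((N:ℝ))) ^ N := by
      rw [hcard]
      apply pow_le_pow_left₀
      · exact div_nonneg (Finset.sum_nonneg (fun i _ => hterm i)) (by positivity)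
      · exact (div_le_div_iff_of_pos_right hNpos).mpr (h2.trans h3.le)
    calc (∏ i ∈ S, (1 - p i * t)) ≤ ((∑ i ∈ S, (1 - p i * t)) / S.card) ^ S.card := h1
      _ ≤ (((n:ℝ) * (1 - pbar * t)) / ((N:ℝ))) ^ N := h4
      _ = c ^ N * (1 - pbar * t) ^ N := by
          rw [← mul_pow]
          congr 1
          rw [hc, hNcast]
          ring
  -- continuity / integrability
  have hfc : Continuous (fun t : ℝ => ∏ i ∈ S, (1 - p i * t)) := by
    apply continuous_finset_prod
    intro i _
    exact continuous_const.sub (continuous_const.mul continuous_id)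
  have hgc : Continuous (fun t : ℝ => c ^ N * (1 - pbar * t) ^ N) :=
    continuous_const.mul ((continuous_const.sub (continuous_const.mul continuous_id)).pow N)
  have hmono : (∫ t in (0:ℝ)..1, ∏ i ∈ S, (1 - p i * t))
      ≤ ∫ t in (0:ℝ)..1, c ^ N * (1 - pbar * t) ^ N := by
    apply intervalIntegral.integral_mono_on (by norm_num)
      (hfc.intervalIntegrable _ _) (hgc.intervalIntegrable _ _) hpt
  -- compute the integral of the bound
  have hF : ∀ t : ℝ, HasDerivAt (fun s : ℝ => -((1 - pbar * s) ^ (N + 1)) / (((N:ℝ)+1) * pbar))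
      ((1 - pbar * t) ^ N) t := by
    intro t
    have h1 : HasDerivAt (fun s : ℝ => 1 - pbar * s) (-(pbar * 1)) t :=
      ((hasDerivAt_id t).const_mul pbar).const_sub 1
    have h2 := (h1.fun_pow (N + 1)).fun_neg.div_const (((N:ℝ)+1) * pbar)
    refine h2.congr_deriv ?_
    have hNp : (0:ℝ) < (N:ℝ) + 1 := by positivity
    rw [Nat.add_sub_cancel]
    push_cast
    field_simp
  have hint : (∫ t in (0:ℝ)..1, (1 - pbar * t) ^ N)
      = (1 - (1 - pbar) ^ (N + 1)) / (((N:ℝ)+1) * pbar) := by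
    rw [intervalIntegral.integral_eq_sub_of_hasDerivAt (fun t _ => hF t)
      (((continuous_const.sub (continuous_const.mul continuous_id)).pow N).intervalIntegrable _ _)]
    simp only [mul_one, mul_zero, sub_zero, one_pow]
    ring
  have hNppos : (0:ℝ) < ((N:ℝ) + 1) * pbar := by positivity
  have hIle : (∫ t in (0:ℝ)..1, (1 - pbar * t) ^ N) ≤ 1 / (((N:ℝ)+1) * pbar) := by
    rw [hint]
    apply (div_le_div_iff_of_pos_right hNppos).mpr
    have : 0 ≤ (1 - pbar) ^ (N+1) := pow_nonneg (by linarith) _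
    linarith
  have hmain : (∫ t in (0:ℝ)..1, ∏ i ∈ S, (1 - p i * t))
      ≤ c ^ N * (1 / (((N:ℝ)+1) * pbar)) := by
    calc (∫ t in (0:ℝ)..1, ∏ i ∈ S, (1 - p i * t))
        ≤ ∫ t in (0:ℝ)..1, c ^ N * (1 - pbar * t) ^ N := hmono
      _ = c ^ N * ∫ t in (0:ℝ)..1, (1 - pbar * t) ^ N := by
          rw [intervalIntegral.integral_const_mul]
      _ ≤ c ^ N * (1 / (((N:ℝ)+1) * pbar)) := by
          apply mul_le_mul_of_nonneg_left hIle (by positivity)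
  have hrhs : c ^ N * (1 / (((N:ℝ)+1) * pbar))
      = ((n:ℝ) / ((n:ℝ) - 2)) ^ (n - 2) * ((n:ℝ) / ((n:ℝ) - 1)) * (1 / ((n:ℝ) * pbar)) := by
    rw [hN1cast, hc, hNdef]
    have h1 : (n:ℝ) - 1 ≠ 0 := by linarith
    have h2 : (n:ℝ) ≠ 0 := by linarith
    have h3 : pbar ≠ 0 := ne_of_gt hpos
    rw [mul_assoc]
    congr 1
    rw [div_mul_div_comm, div_eq_div_iff (by positivity) (by positivity)]
    ring
  constructor
  · rw [← hrhs]; exact hmain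
  · have hK : c ^ N * ((n:ℝ) / ((n:ℝ) - 1)) < Real.exp 2 := by
      have := K_lt_exp_two N hN1
      rw [← hc'] at this
      have heq : (n:ℝ) / ((n:ℝ) - 1) = ((N:ℝ) + 2) / ((N:ℝ) + 1) := by
        rw [hNcast]; ring_nf
      rw [heq]
      exact this
    have hnp : (0:ℝ) < (n:ℝ) * pbar := by positivity
    calc (∫ t in (0:ℝ)..1, ∏ i ∈ S, (1 - p i * t))
        ≤ ((n:ℝ) / ((n:ℝ) - 2)) ^ (n - 2) * ((n:ℝ) / ((n:ℝ) - 1)) * (1 / ((n:ℝ) * pbar)) := by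
          rw [← hrhs]; exact hmain
      _ < Real.exp 2 / ((n:ℝ) * pbar) := by
          rw [mul_one_div, div_lt_div_iff_of_pos_right hnp]
          exact hK
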